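/- arXiv:2410.10029 — 2 statements merged into one kernel-verified Lean document; each statement's English description precedes it below -/
import Mathlib

section
/- Let $\mathscr{L}_{F_K}$ be Coleman's trace operator for a Lubin-Tate formal group $F_K$ over $\mathcal{O}_K$, and let $\alpha \in \mathcal{O}_L^\times$ be a unit (where $L \subseteq K$). Then the $\alpha$-eigenspace of $\mathscr{L}_{F_K}$ in $\pi_L\mathcal{O}_K[[x]]$ is trivial: if $g \in \pi_L\mathcal{O}_K[[x]]$ satisfies $\mathscr{L}_{F_K}(g) = \alpha g$, then $g = 0$. -/
open PowerSeries Finset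

noncomputable section

namespace Coleman

variable {R : Type*} [CommRing R]

/-- The coefficient of `x^i y^j` in a two-variable power series. -/
def mcoeff (R : Type*) [CommRing R] (i j : ℕ) (F : MvPowerSeries (Fin 2) R) : R :=
  MvPowerSeries.coeff (Finsupp.single 0 i + Finsupp.single 1 j) F

/-- Exact composition `g(h)`; this is the correct composite when `h` has zero constant term. -/
def pcomp (g h : R⟦X⟧) : R⟦X⟧ :=
  PowerSeries.mk fun n => ∑ k ∈ range (n + 1), coeff k g * coeff n (h ^ k)

/-- Exact substitution `F(a,b)`; correct when `a`, `b` have zero constant term. -/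
def pcomp2 (F : MvPowerSeries (Fin 2) R) (a b : R⟦X⟧) : R⟦X⟧ :=
  PowerSeries.mk fun n => ∑ i ∈ range (n + 1), ∑ j ∈ range (n + 1),
    mcoeff R i j F * coeff n (a ^ i * b ^ j)

/-- Total degree of a bi-exponent. -/
def mdeg (d : Fin 2 →₀ ℕ) : ℕ := d 0 + d 1

/-- `g(F)` for a two-variable `F` with zero constant term. -/
def mcomp1 (g : R⟦X⟧) (F : MvPowerSeries (Fin 2) R) : MvPowerSeries (Fin 2) R :=
  fun d => ∑ k ∈ range (mdeg d + 1), coeff k g * MvPowerSeries.coeff d (F ^ k)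

/-- `F(A,B)` for two-variable `A`, `B` with zero constant term. -/
def mcomp2 (F A B : MvPowerSeries (Fin 2) R) : MvPowerSeries (Fin 2) R :=
  fun d => ∑ i ∈ range (mdeg d + 1), ∑ j ∈ range (mdeg d + 1),
    mcoeff R i j F * MvPowerSeries.coeff d (A ^ i * B ^ j)

/-- The one-variable series `g` viewed as a series in the variable `i` only. -/
def embedVar (i : Fin 2) (g : R⟦X⟧) : MvPowerSeries (Fin 2) R :=
  fun d => if d = Finsupp.single i (d i) then coeff (d i) g else 0

/-- `S = g(a)`, where the substitution is understood as a `t`-adic (coefficientwise) limit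
of the partial sums `∑_{k<M} g_k a^k`. -/
def IsSubst (t : R) (g a S : R⟦X⟧) : Prop :=
  ∀ n N : ℕ, ∃ M₀ : ℕ, ∀ M ≥ M₀,
    t ^ N ∣ (coeff n S - ∑ k ∈ range M, coeff k g * coeff n (a ^ k))

/-- `S = F(a,b)`, as a `t`-adic coefficientwise limit of partial sums. -/
def IsSubst2 (t : R) (F : MvPowerSeries (Fin 2) R) (a b S : R⟦X⟧) : Prop :=
  ∀ n N : ℕ, ∃ M₀ : ℕ, ∀ M ≥ M₀,
    t ^ N ∣ (coeff n S - ∑ i ∈ range M, ∑ j ∈ range M,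
      mcoeff R i j F * coeff n (a ^ i * b ^ j))

/-- `S` is the formal-group (`F`-) sum of the list `l` of power series. -/
def IsLTSum (t : R) (F : MvPowerSeries (Fin 2) R) : List R⟦X⟧ → R⟦X⟧ → Prop
  | [], S => S = 0
  | a :: l, S => ∃ T, IsLTSum t F l T ∧ IsSubst2 t F a T S

/-- `v = g(u)`, as a `t`-adic limit of partial sums. -/
def IsEvalAt (t : R) (g : R⟦X⟧) (u v : R) : Prop :=
  ∀ N : ℕ, ∃ M₀, ∀ M ≥ M₀, t ^ N ∣ (v - ∑ k ∈ range M, coeff k g * u ^ k)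

/-- `w = F(u,v)`, as a `t`-adic limit of partial sums. -/
def IsEval2At (t : R) (F : MvPowerSeries (Fin 2) R) (u v w : R) : Prop :=
  ∀ N : ℕ, ∃ M₀, ∀ M ≥ M₀,
    t ^ N ∣ (w - ∑ i ∈ range M, ∑ j ∈ range M, mcoeff R i j F * u ^ i * v ^ j)

/-- `F` is a (one-dimensional, commutative) formal group law. -/
structure IsFGL (F : MvPowerSeries (Fin 2) R) : Prop where
  unitX : ∀ n, mcoeff R n 0 F = if n = 1 then 1 else 0
  unitY : ∀ n, mcoeff R 0 n F = if n = 1 then 1 else 0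
  comm : ∀ i j, mcoeff R i j F = mcoeff R j i F

/-- `f` is a Lubin-Tate series for the uniformizer `π` and residue cardinality `q`:
`f ≡ πx mod x²` and `f ≡ x^q mod π`. -/
structure IsLT (π : R) (q : ℕ) (f : R⟦X⟧) : Prop where
  const : constantCoeff f = 0
  lin : coeff 1 f = π
  frob : ∀ n, π ∣ (coeff n f - if n = q then 1 else 0)

/-- `F` is the Lubin-Tate formal group law attached to `f`:
`F ≡ x + y mod deg 2` and `f(F(x,y)) = F(f(x),f(y))`. -/
structure IsLTFGL (π : R) (q : ℕ) (f : R⟦X⟧) (F : MvPowerSeries (Fin 2) R) : Prop where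
  isFGL : IsFGL F
  isLT : IsLT π q f
  commf : mcomp1 f F = mcomp2 F (embedVar 0 f) (embedVar 1 f)

/-- `g = [a]`, the Lubin-Tate endomorphism attached to `a`: `g ≡ a x mod x²` and `f∘g = g∘f`. -/
structure IsBracket (f : R⟦X⟧) (a : R) (g : R⟦X⟧) : Prop where
  const : constantCoeff g = 0
  lin : coeff 1 g = a
  commf : pcomp f g = pcomp g f

/-- Every coefficient of `f` is divisible by `c`. -/
def DvdAll (c : R) (f : R⟦X⟧) : Prop := ∀ n, c ∣ coeff n f


section Rel

variable {OK A : Type*} [CommRing OK] [CommRing A] [Algebra OK A]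

/-- `Rr i = r(x ⊕_K z_i)`: there are series `B i = F_K(x, z_i)` (substitution of the constant
`z_i` into the second variable of `F_K`, as an adic limit) with `Rr i = r(B i)` (again as an
adic limit, since `B i` has nonzero small constant term). -/
def IsOplusList (ϖ : A) (FKm : MvPowerSeries (Fin 2) A) {q : ℕ} (zs : Fin q → A)
    (r : OK⟦X⟧) (Rr : Fin q → A⟦X⟧) : Prop :=
  ∃ B : Fin q → A⟦X⟧,
    (∀ i, IsSubst2 ϖ FKm X (PowerSeries.C (zs i)) (B i)) ∧
    ∀ i, IsSubst ϖ (PowerSeries.map (algebraMap OK A) r) (B i) (Rr i)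

/-- `r ∈ 𝒜^α_{L,K}`: `|r(0)| < 1` and
`∑^{LT,L}_{z ∈ 𝔉₀(F_K)} r(x ⊕_K z) = [α]_L(r([π_K]_K(x)))`, where `bα` is (the image in
`A⟦x⟧` of) the endomorphism `[α]_L` and `fK = [π_K]_K`. -/
def MemA (ϖ : A) (FLm FKm : MvPowerSeries (Fin 2) A) {q : ℕ} (zs : Fin q → A)
    (fK : OK⟦X⟧) (bα : A⟦X⟧) (πK : OK) (r : OK⟦X⟧) : Prop :=
  πK ∣ constantCoeff r ∧
  ∃ (Rr : Fin q → A⟦X⟧) (S RHS : A⟦X⟧),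
    IsOplusList ϖ FKm zs r Rr ∧
    IsLTSum ϖ FLm (List.ofFn Rr) S ∧
    IsSubst ϖ bα (PowerSeries.map (algebraMap OK A) (pcomp r fK)) RHS ∧
    S = RHS

/-- `h ∈ 𝒟_{L,K}`: `∑^{LT,L}_{z ∈ 𝔉₀(F_K)} h(x ⊕_K z) = 0`. -/
def MemD (ϖ : A) (FLm FKm : MvPowerSeries (Fin 2) A) {q : ℕ} (zs : Fin q → A)
    (h : OK⟦X⟧) : Prop :=
  ∃ (Rh : Fin q → A⟦X⟧) (S : A⟦X⟧),
    IsOplusList ϖ FKm zs h Rh ∧ IsLTSum ϖ FLm (List.ofFn Rh) S ∧ S = 0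

/-- `φr = φ^α_{L,K}(r) = [q_K/α]_L(r(x)) ⊖_L r([π_K]_K(x))`, where `bq` is (the image of)
`[q_K/α]_L` and `ιm` (the image of) the formal inverse series of `F_L`. -/
def IsPhi (ϖ : A) (FLm : MvPowerSeries (Fin 2) A) (fK : OK⟦X⟧) (bq ιm : A⟦X⟧)
    (r : OK⟦X⟧) (φr : A⟦X⟧) : Prop :=
  ∃ a m : A⟦X⟧,
    IsSubst ϖ bq (PowerSeries.map (algebraMap OK A) r) a ∧
    IsSubst ϖ ιm (PowerSeries.map (algebraMap OK A) (pcomp r fK)) m ∧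
    IsSubst2 ϖ FLm a m φr

/-- `T = 𝓛_{F_K}(g)`, Coleman's trace operator:
`T([π_K]_K(x)) = ∑_{z ∈ 𝔉₀(F_K)} g(x ⊕_K z)` (ordinary sum). -/
def IsTraceOf (ϖ : A) (FKm : MvPowerSeries (Fin 2) A) {q : ℕ} (zs : Fin q → A)
    (fK : OK⟦X⟧) (g T : OK⟦X⟧) : Prop :=
  ∃ Rg : Fin q → A⟦X⟧, IsOplusList ϖ FKm zs g Rg ∧
    PowerSeries.map (algebraMap OK A) (pcomp T fK) = ∑ i, Rg i

end Rel

section Aux13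

variable {R : Type*} [CommRing R]

lemma dvd_sum_sub {ι : Type*} (s : Finset ι) (t : R) (f h : ι → R)
    (H : ∀ i ∈ s, t ∣ f i - h i) : t ∣ (∑ i ∈ s, f i) - ∑ i ∈ s, h i := by
  rw [← Finset.sum_sub_distrib]
  exact Finset.dvd_sum H

lemma cw_mul (t : R) {a b a' b' : R⟦X⟧} (ha : ∀ n, t ∣ coeff n a - coeff n a')
    (hb : ∀ n, t ∣ coeff n b - coeff n b') :
    ∀ n, t ∣ coeff n (a * b) - coeff n (a' * b') := by
  intro n
  rw [PowerSeries.coeff_mul, PowerSeries.coeff_mul]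
  apply dvd_sum_sub
  intro p _
  have : coeff p.1 a * coeff p.2 b - coeff p.1 a' * coeff p.2 b'
      = (coeff p.1 a - coeff p.1 a') * coeff p.2 b
        + coeff p.1 a' * (coeff p.2 b - coeff p.2 b') := by ring
  rw [this]
  exact dvd_add ((ha p.1).mul_right _) ((hb p.2).mul_left _)

lemma cw_pow (t : R) {a a' : R⟦X⟧} (ha : ∀ n, t ∣ coeff n a - coeff n a') (k : ℕ) :
    ∀ n, t ∣ coeff n (a ^ k) - coeff n (a' ^ k) := by
  induction k with
  | zero => simp
  | succ k ih =>
      have := cw_mul t ih ha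
      simpa [pow_succ] using this

lemma mcw_mul (t : R) {a b a' b' : MvPowerSeries (Fin 2) R}
    (ha : ∀ e, t ∣ MvPowerSeries.coeff e a - MvPowerSeries.coeff e a')
    (hb : ∀ e, t ∣ MvPowerSeries.coeff e b - MvPowerSeries.coeff e b') :
    ∀ e, t ∣ MvPowerSeries.coeff e (a * b) - MvPowerSeries.coeff e (a' * b') := by
  classical
  intro e
  rw [MvPowerSeries.coeff_mul, MvPowerSeries.coeff_mul]
  apply dvd_sum_sub
  intro p _
  have : MvPowerSeries.coeff p.1 a * MvPowerSeries.coeff p.2 b -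
        MvPowerSeries.coeff p.1 a' * MvPowerSeries.coeff p.2 b'
      = (MvPowerSeries.coeff p.1 a - MvPowerSeries.coeff p.1 a') *
          MvPowerSeries.coeff p.2 b
        + MvPowerSeries.coeff p.1 a' *
            (MvPowerSeries.coeff p.2 b - MvPowerSeries.coeff p.2 b') := by ring
  rw [this]
  exact dvd_add ((ha p.1).mul_right _) ((hb p.2).mul_left _)

lemma mcw_pow (t : R) {a a' : MvPowerSeries (Fin 2) R}
    (ha : ∀ e, t ∣ MvPowerSeries.coeff e a - MvPowerSeries.coeff e a') (k : ℕ) :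
    ∀ e, t ∣ MvPowerSeries.coeff e (a ^ k) - MvPowerSeries.coeff e (a' ^ k) := by
  induction k with
  | zero => simp
  | succ k ih =>
      have := mcw_mul t ih ha
      simpa [pow_succ] using this

lemma mdeg_add (u v : Fin 2 →₀ ℕ) : mdeg (u + v) = mdeg u + mdeg v := by
  simp [mdeg]; ring

lemma fin2_decomp (e : Fin 2 →₀ ℕ) :
    e = Finsupp.single 0 (e 0) + Finsupp.single 1 (e 1) := by
  ext a
  have : a = 0 ∨ a = 1 := by omega
  rcases this with rfl | rfl <;> simp [Finsupp.single_apply]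

lemma pair_apply0 (a b : ℕ) :
    ((Finsupp.single (0 : Fin 2) a + Finsupp.single 1 b) : Fin 2 →₀ ℕ) 0 = a := by
  simp [Finsupp.add_apply, Finsupp.single_apply]

lemma pair_apply1 (a b : ℕ) :
    ((Finsupp.single (0 : Fin 2) a + Finsupp.single 1 b) : Fin 2 →₀ ℕ) 1 = b := by
  simp [Finsupp.add_apply, Finsupp.single_apply]

lemma pair_eq {a b a' b' : ℕ}
    (h : (Finsupp.single (0 : Fin 2) a + Finsupp.single 1 b)
      = Finsupp.single 0 a' + Finsupp.single 1 b') : a = a' ∧ b = b' := by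
  constructor
  · have := congrArg (fun f : Fin 2 →₀ ℕ => f 0) h
    simpa [pair_apply0] using this
  · have := congrArg (fun f : Fin 2 →₀ ℕ => f 1) h
    simpa [pair_apply1] using this

lemma mdeg_pair (a b : ℕ) :
    mdeg (Finsupp.single (0 : Fin 2) a + Finsupp.single 1 b) = a + b := by
  simp [mdeg, pair_apply0, pair_apply1]

/-- `MOrd m S`: every monomial of `S` has total degree `≥ m`. -/
def MOrd (m : ℕ) (S : MvPowerSeries (Fin 2) R) : Prop :=
  ∀ e, mdeg e < m → MvPowerSeries.coeff e S = 0

lemma MOrd.mul {a b : ℕ} {S T : MvPowerSeries (Fin 2) R} (hS : MOrd a S) (hT : MOrd b T) :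
    MOrd (a + b) (S * T) := by
  classical
  intro e he
  rw [MvPowerSeries.coeff_mul]
  apply Finset.sum_eq_zero
  intro p hp
  have hpe : p.1 + p.2 = e := Finset.HasAntidiagonal.mem_antidiagonal.mp hp
  have hdeg : mdeg p.1 + mdeg p.2 < a + b := by
    rw [← mdeg_add, hpe]; exact he
  rcases lt_or_ge (mdeg p.1) a with h1 | h1
  · rw [hS p.1 h1, zero_mul]
  · have h2 : mdeg p.2 < b := by omega
    rw [hT p.2 h2, mul_zero]

lemma MOrd.zero_any (T : MvPowerSeries (Fin 2) R) : MOrd 0 T := by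
  intro e he; omega

lemma MOrd.pow {a : ℕ} {S : MvPowerSeries (Fin 2) R} (hS : MOrd a S) (k : ℕ) :
    MOrd (a * k) (S ^ k) := by
  induction k with
  | zero => simpa [Nat.mul_zero] using MOrd.zero_any (R := R) 1
  | succ k ih =>
      rw [pow_succ, Nat.mul_succ]
      exact ih.mul hS

lemma mono_pow (v : Fin 2) (c k : ℕ) :
    (MvPowerSeries.monomial (Finsupp.single v c) (1 : R)) ^ k
      = MvPowerSeries.monomial (Finsupp.single v (c * k)) 1 := by
  induction k with
  | zero => simp [MvPowerSeries.monomial_zero_one]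
  | succ k ih =>
      rw [pow_succ, ih, MvPowerSeries.monomial_mul_monomial, ← Finsupp.single_add, mul_one]
      have : c * k + c = c * (k + 1) := by ring
      rw [this]

/-- Coefficient of the mapped series. -/
lemma mcoeff_map {S : Type*} [CommRing S] (f : R →+* S) (i j : ℕ)
    (F : MvPowerSeries (Fin 2) R) :
    mcoeff S i j (MvPowerSeries.map f F) = f (mcoeff R i j F) := by
  simp [mcoeff, MvPowerSeries.coeff_map]

lemma coeff_X_pow_C {c : R} (n a b : ℕ) :
    coeff n ((X : R⟦X⟧) ^ a * (PowerSeries.C c) ^ b)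
      = c ^ b * (if n = a then 1 else 0) := by
  rw [← map_pow, mul_comm, PowerSeries.coeff_C_mul, PowerSeries.coeff_X_pow]

/-- The key coefficient computation: `coeff_{(q-1,1)} (F^q) = q` for a formal group law `F`. -/
lemma coeff_pow_fgl {F : MvPowerSeries (Fin 2) R} (hF : IsFGL F) {q : ℕ} (hq : 2 ≤ q) :
    MvPowerSeries.coeff (Finsupp.single 0 (q - 1) + Finsupp.single 1 1) (F ^ q)
      = (q : R) := by
  classical
  set d₀ : Fin 2 →₀ ℕ := Finsupp.single 0 (q - 1) + Finsupp.single 1 1 with hd₀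
  have hmdeg : mdeg d₀ = q := by rw [hd₀, mdeg_pair]; omega
  set L : MvPowerSeries (Fin 2) R :=
    MvPowerSeries.monomial (Finsupp.single 0 1) 1
      + MvPowerSeries.monomial (Finsupp.single 1 1) 1 with hL
  set H : MvPowerSeries (Fin 2) R := F - L with hH
  have hFLH : F = L + H := by rw [hH]; ring
  -- H has order ≥ 2
  have hOrdH : MOrd 2 H := by
    intro e he
    have hdec := fin2_decomp e
    set a := e 0; set b := e 1
    have hab : a + b < 2 := by
      have : mdeg e = a + b := rfl
      omega
    have habc : (a = 0 ∧ b = 0) ∨ (a = 1 ∧ b = 0) ∨ (a = 0 ∧ b = 1) := by omega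
    have hFe : MvPowerSeries.coeff e F = mcoeff R a b F := by
      rw [mcoeff, ← hdec]
    have hLe : MvPowerSeries.coeff e L
        = (if e = Finsupp.single 0 1 then 1 else 0)
          + (if e = Finsupp.single 1 1 then 1 else 0) := by
      rw [hL, map_add, MvPowerSeries.coeff_monomial, MvPowerSeries.coeff_monomial]
    rw [hH, map_sub, hFe, hLe]
    rcases habc with ⟨ha', hb'⟩ | ⟨ha', hb'⟩ | ⟨ha', hb'⟩
    · rw [ha', hb'] at hdec ⊢
      have h1 : e ≠ Finsupp.single 0 1 := by
        intro h
        have := congrArg (fun f : Fin 2 →₀ ℕ => f 0) h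
        simp [Finsupp.single_apply] at this
        omega
      have h2 : e ≠ Finsupp.single 1 1 := by
        intro h
        have := congrArg (fun f : Fin 2 →₀ ℕ => f 1) h
        simp [Finsupp.single_apply] at this
        omega
      rw [hF.unitX 0]
      simp [h1, h2]
    · rw [ha', hb'] at hdec ⊢
      have he1 : e = Finsupp.single 0 1 := by
        rw [hdec]; simp
      rw [hF.unitX 1]
      simp [he1, Finsupp.single_eq_single_iff]
    · rw [ha', hb'] at hdec ⊢
      have he1 : e = Finsupp.single 1 1 := by
        rw [hdec]; simp
      rw [hF.unitY 1]
      simp [he1, Finsupp.single_eq_single_iff]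
  have hOrdL : MOrd 1 L := by
    intro e he
    have h0 : mdeg e = 0 := by omega
    have he0 : e = 0 := by
      have hdec := fin2_decomp e
      have : e 0 + e 1 = 0 := h0
      rw [hdec]
      have h1 : e 0 = 0 := by omega
      have h2 : e 1 = 0 := by omega
      rw [h1, h2]; simp
    rw [he0, hL, map_add, MvPowerSeries.coeff_monomial, MvPowerSeries.coeff_monomial]
    have h1 : (0 : Fin 2 →₀ ℕ) ≠ Finsupp.single 0 1 := by
      intro h
      have := congrArg (fun f : Fin 2 →₀ ℕ => f 0) h
      simp [Finsupp.single_apply] at this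
    have h2 : (0 : Fin 2 →₀ ℕ) ≠ Finsupp.single 1 1 := by
      intro h
      have := congrArg (fun f : Fin 2 →₀ ℕ => f 1) h
      simp [Finsupp.single_apply] at this
    simp [h1, h2]
  -- expand (L + H)^q
  rw [hFLH, add_pow, map_sum]
  rw [Finset.sum_eq_single q]
  · -- the k = q term : L^q * H^0 * 1
    rw [Nat.sub_self, pow_zero, Nat.choose_self]
    simp only [Nat.cast_one, mul_one]
    -- now coeff d₀ (L^q) = q
    rw [hL, add_pow, map_sum]
    rw [Finset.sum_eq_single (q - 1)]
    · rw [mono_pow, mono_pow]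
      have hq1 : q - (q - 1) = 1 := by omega
      rw [hq1]
      rw [MvPowerSeries.monomial_mul_monomial, mul_one, one_mul, one_mul]
      have : (MvPowerSeries.coeff d₀)
          ((MvPowerSeries.monomial (Finsupp.single 0 (q - 1) + Finsupp.single 1 1)) 1
            * ((q.choose (q - 1) : ℕ) : MvPowerSeries (Fin 2) R))
          = (q.choose (q - 1) : ℕ) •
            (MvPowerSeries.coeff d₀)
              ((MvPowerSeries.monomial (Finsupp.single 0 (q - 1) + Finsupp.single 1 1)) 1) := by
        rw [mul_comm, ← nsmul_eq_mul, map_nsmul]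
      rw [this, MvPowerSeries.coeff_monomial, if_pos hd₀.symm.symm]
      have hch : q.choose (q - 1) = q := by
        have h1 : q - 1 + 1 = q := by omega
        calc q.choose (q - 1) = (q - 1 + 1).choose (q - 1) := by rw [h1]
          _ = q - 1 + 1 := Nat.choose_succ_self_right _
          _ = q := h1
      simp [hch, nsmul_eq_mul]
    · intro j hj hjq
      rw [mono_pow, mono_pow, MvPowerSeries.monomial_mul_monomial, mul_one, one_mul, one_mul]
      have : (MvPowerSeries.coeff d₀)
          ((MvPowerSeries.monomial (Finsupp.single 0 j + Finsupp.single 1 (q - j))) 1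
            * ((q.choose j : ℕ) : MvPowerSeries (Fin 2) R))
          = (q.choose j : ℕ) •
            (MvPowerSeries.coeff d₀)
              ((MvPowerSeries.monomial (Finsupp.single 0 j + Finsupp.single 1 (q - j))) 1) := by
        rw [mul_comm, ← nsmul_eq_mul, map_nsmul]
      rw [this, MvPowerSeries.coeff_monomial]
      have hne : d₀ ≠ Finsupp.single 0 j + Finsupp.single 1 (q - j) := by
        intro h
        rw [hd₀] at h
        obtain ⟨h1, h2⟩ := pair_eq h
        apply hjq
        omega
      rw [if_neg hne]
      simp
    · intro h
      exfalso
      apply h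
      simp only [Finset.mem_range]
      omega
  · -- all k ≠ q terms vanish
    intro k hk hkq
    have hk' : k < q := by
      simp only [Finset.mem_range] at hk
      omega
    have hOrd : MOrd (k + 2 * (q - k) + 0)
        (L ^ k * H ^ (q - k) * ((q.choose k : ℕ) : MvPowerSeries (Fin 2) R)) := by
      have h1 : MOrd (1 * k) (L ^ k) := hOrdL.pow k
      have h2 : MOrd (2 * (q - k)) (H ^ (q - k)) := hOrdH.pow (q - k)
      have h3 := (h1.mul h2).mul
        (MOrd.zero_any (R := R) (((q.choose k : ℕ) : MvPowerSeries (Fin 2) R)))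
      simpa [one_mul] using h3
    apply hOrd
    omega
  · intro h
    exfalso
    apply h
    simp only [Finset.mem_range]
    omega

/-- In a formal group law situation attached to a Lubin-Tate series,
`π` divides `q` in the base ring. -/
lemma pi_dvd_q {π : R} {q : ℕ} (hq : 2 ≤ q) {f : R⟦X⟧} {F : MvPowerSeries (Fin 2) R}
    (hF : IsFGL F)
    (hfrob : ∀ n, π ∣ (coeff n f - if n = q then 1 else 0))
    (hcomm : mcomp1 f F = mcomp2 F (embedVar 0 f) (embedVar 1 f)) :
    π ∣ (q : R) := by
  classical
  set d₀ : Fin 2 →₀ ℕ := Finsupp.single 0 (q - 1) + Finsupp.single 1 1 with hd₀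
  have hmdeg : mdeg d₀ = q := by rw [hd₀, mdeg_pair]; omega
  have hcomm' : mcomp1 f F d₀ = mcomp2 F (embedVar 0 f) (embedVar 1 f) d₀ :=
    congrFun hcomm d₀
  -- LHS ≡ coeff d₀ (F^q) = q mod π
  have hlhs : π ∣ (mcomp1 f F d₀ - (q : R)) := by
    have h1 : π ∣ mcomp1 f F d₀
        - ∑ k ∈ range (mdeg d₀ + 1),
            (if k = q then (1 : R) else 0) * MvPowerSeries.coeff d₀ (F ^ k) := by
      apply dvd_sum_sub
      intro k _
      have : coeff k f * MvPowerSeries.coeff d₀ (F ^ k)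
          - (if k = q then (1 : R) else 0) * MvPowerSeries.coeff d₀ (F ^ k)
          = (coeff k f - if k = q then 1 else 0) * MvPowerSeries.coeff d₀ (F ^ k) := by
        ring
      rw [this]
      exact (hfrob k).mul_right _
    have h2 : ∑ k ∈ range (mdeg d₀ + 1),
        (if k = q then (1 : R) else 0) * MvPowerSeries.coeff d₀ (F ^ k)
        = MvPowerSeries.coeff d₀ (F ^ q) := by
      rw [Finset.sum_eq_single q]
      · simp
      · intro k _ hkq; simp [hkq]
      · intro h
        exfalso; apply h
        simp only [Finset.mem_range]
        omega
    rw [h2] at h1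
    rw [hd₀] at h1
    rw [coeff_pow_fgl hF hq] at h1
    exact h1
  -- RHS ≡ 0 mod π
  have hA : ∀ e, π ∣ (MvPowerSeries.coeff e (embedVar 0 f)
      - MvPowerSeries.coeff e (MvPowerSeries.monomial (Finsupp.single 0 q) 1)) := by
    intro e
    rw [MvPowerSeries.coeff_apply, MvPowerSeries.coeff_monomial, embedVar]
    by_cases h1 : e = Finsupp.single 0 (e 0)
    · rw [if_pos h1]
      by_cases h2 : e 0 = q
      · have : e = Finsupp.single 0 q := by rw [h1, h2]
        rw [if_pos this, h2]
        simpa using hfrob q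
      · have : e ≠ Finsupp.single 0 q := by
          intro h
          apply h2
          have := congrArg (fun f : Fin 2 →₀ ℕ => f 0) h
          simpa [Finsupp.single_apply] using this
        rw [if_neg this]
        have := hfrob (e 0)
        rw [if_neg h2] at this
        simpa using this
    · rw [if_neg h1]
      have : e ≠ Finsupp.single 0 q := by
        intro h
        apply h1
        rw [h]
        simp [Finsupp.single_apply]
      rw [if_neg this]
      simp
  have hB : ∀ e, π ∣ (MvPowerSeries.coeff e (embedVar 1 f)
      - MvPowerSeries.coeff e (MvPowerSeries.monomial (Finsupp.single 1 q) 1)) := by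
    intro e
    rw [MvPowerSeries.coeff_apply, MvPowerSeries.coeff_monomial, embedVar]
    by_cases h1 : e = Finsupp.single 1 (e 1)
    · rw [if_pos h1]
      by_cases h2 : e 1 = q
      · have : e = Finsupp.single 1 q := by rw [h1, h2]
        rw [if_pos this, h2]
        simpa using hfrob q
      · have : e ≠ Finsupp.single 1 q := by
          intro h
          apply h2
          have := congrArg (fun f : Fin 2 →₀ ℕ => f 1) h
          simpa [Finsupp.single_apply] using this
        rw [if_neg this]
        have := hfrob (e 1)
        rw [if_neg h2] at this
        simpa using this
    · rw [if_neg h1]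
      have : e ≠ Finsupp.single 1 q := by
        intro h
        apply h1
        rw [h]
        simp [Finsupp.single_apply]
      rw [if_neg this]
      simp
  have hrhs : π ∣ mcomp2 F (embedVar 0 f) (embedVar 1 f) d₀ := by
    apply Finset.dvd_sum
    intro i _
    apply Finset.dvd_sum
    intro j _
    apply Dvd.dvd.mul_left
    -- π ∣ coeff d₀ (A^i * B^j)
    have hcong := mcw_mul π (mcw_pow π hA i) (mcw_pow π hB j) d₀
    have hmono : MvPowerSeries.coeff d₀
        ((MvPowerSeries.monomial (Finsupp.single (0 : Fin 2) q) (1 : R)) ^ i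
          * (MvPowerSeries.monomial (Finsupp.single (1 : Fin 2) q) (1 : R)) ^ j) = 0 := by
      rw [mono_pow, mono_pow, MvPowerSeries.monomial_mul_monomial, mul_one,
        MvPowerSeries.coeff_monomial]
      have : d₀ ≠ Finsupp.single 0 (q * i) + Finsupp.single 1 (q * j) := by
        intro h
        rw [hd₀] at h
        obtain ⟨h1, h2⟩ := pair_eq h
        -- 1 = q * j is impossible since q ≥ 2
        have hdvd : q ∣ 1 := ⟨j, h2⟩
        have := Nat.le_of_dvd one_pos hdvd
        omega
      rw [if_neg this]
    rw [hmono] at hcong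
    simpa using hcong
  rw [hcomm'] at hlhs
  have := dvd_sub hrhs hlhs
  simpa using this

lemma zero_of_forall_pow_dvd {A : Type*} [CommRing A] [IsDomain A] [IsDiscreteValuationRing A]
    {ϖ : A} (hϖ : Irreducible ϖ) {z : A} (h : ∀ n : ℕ, ϖ ^ n ∣ z) : z = 0 := by
  by_contra hz
  obtain ⟨n, u, rfl⟩ := IsDiscreteValuationRing.eq_unit_mul_pow_irreducible hz hϖ
  have h1 := h (n + 1)
  rw [pow_succ] at h1
  obtain ⟨c, hc⟩ := h1
  have hn : (ϖ : A) ^ n ≠ 0 := pow_ne_zero _ hϖ.ne_zero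
  have h2 : ϖ ∣ (u : A) := by
    refine ⟨c, ?_⟩
    apply mul_left_cancel₀ hn
    calc (ϖ : A) ^ n * u = u * ϖ ^ n := by ring
      _ = ϖ ^ n * ϖ * c := hc
      _ = ϖ ^ n * (ϖ * c) := by ring
  exact hϖ.not_isUnit (isUnit_of_dvd_unit h2 u.isUnit)

end Aux13

/-- For a unit `α ∈ O_L^×`, the `α`-eigenspace of Coleman's trace operator
`𝓛_{F_K}` in `π_L·O_K⟦x⟧` is trivial: if `g ∈ π_L·O_K⟦x⟧` and `𝓛_{F_K}(g) = α·g`,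
then `g = 0`. -/
theorem stmt13
    {OL OK A : Type*} [CommRing OL] [IsDomain OL] [IsDiscreteValuationRing OL]
    [CommRing OK] [IsDomain OK] [IsDiscreteValuationRing OK]
    [CommRing A] [IsDomain A] [IsDiscreteValuationRing A]
    [Algebra OL OK] [Algebra OK A] [Algebra OL A] [IsScalarTower OL OK A]
    (hinj1 : Function.Injective (algebraMap OL OK))
    (hinj2 : Function.Injective (algebraMap OK A))
    (πL : OL) (hπL : Irreducible πL) (πK : OK) (hπK : Irreducible πK)
    (ϖ : A) (hϖ : Irreducible ϖ) [IsAdicComplete (Ideal.span {ϖ}) A]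
    (qL qK : ℕ) (hqL : 2 ≤ qL) (hqK : 2 ≤ qK)
    (fL : OL⟦X⟧) (FL : MvPowerSeries (Fin 2) OL) (hFL : IsLTFGL πL qL fL FL)
    (fK : OK⟦X⟧) (FK : MvPowerSeries (Fin 2) OK) (hFK : IsLTFGL πK qK fK FK)
    -- the roots `𝔉₀(F_K)` of `f_K` (including `0`), inside the maximal ideal of `A`
    (zs : Fin qK → A) (hz0 : ∃ i, zs i = 0)
    (hzroot : ∀ i, IsEvalAt ϖ (PowerSeries.map (algebraMap OK A) fK) (zs i) 0)
    (hzinj : Function.Injective zs) (hzmax : ∀ i, ϖ ∣ zs i)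
    (α : OL) (hα : IsUnit α)
    (g : OK⟦X⟧) (hg : DvdAll (algebraMap OL OK πL) g)
    (heig : IsTraceOf ϖ (MvPowerSeries.map (algebraMap OK A) FK) zs fK g
      (PowerSeries.C (algebraMap OL OK α) * g)) :
    g = 0 := by
  classical
  obtain ⟨Rg, ⟨B, hB, hRB⟩, hsum⟩ := heig
  set φ : OK →+* A := (algebraMap OK A : OK →+* A) with hφ
  set αK : OK := algebraMap OL OK α with hαK
  -- Step A : πK divides qK in OK
  have hπq : πK ∣ (qK : OK) := pi_dvd_q hqK hFK.isFGL hFK.isLT.frob hFK.commf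
  -- a nonzero root of fK exists
  obtain ⟨i₀, hi₀⟩ := hz0
  have hex : ∃ i1 : Fin qK, i1 ≠ i₀ := by
    by_cases h : i₀ = ⟨0, by omega⟩
    · exact ⟨⟨1, by omega⟩, by rw [h]; intro hc; exact absurd (congrArg Fin.val hc) (by simp)⟩
    · exact ⟨⟨0, by omega⟩, fun hc => h hc.symm⟩
  obtain ⟨i1, hi1⟩ := hex
  have hzne : zs i1 ≠ 0 := by
    intro hc
    exact hi1 (hzinj (by rw [hc, hi₀]))
  -- Step B : ϖ ∣ φ πK
  have hπ' : ϖ ∣ φ πK := by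
    by_contra hcon
    have hunit : IsUnit (φ πK) := by
      by_contra hnu
      apply hcon
      rw [← Ideal.mem_span_singleton, ← hϖ.maximalIdeal_eq]
      exact hnu
    -- infinite divisibility of the nonzero root
    have hzpow : ∀ v : ℕ, ϖ ^ (v + 1) ∣ zs i1 := by
      intro v
      induction v with
      | zero => simpa using hzmax i1
      | succ v ih =>
        obtain ⟨M₀, hM⟩ := hzroot i1 (2 * (v + 1))
        have h := hM (max M₀ 2) (le_max_left _ _)
        have hM2 : 2 ≤ max M₀ 2 := le_max_right _ _
        set M := max M₀ 2
        have hsplit : (∑ k ∈ range 2, coeff k (PowerSeries.map φ fK) * zs i1 ^ k)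
            + ∑ k ∈ Finset.Ico 2 M, coeff k (PowerSeries.map φ fK) * zs i1 ^ k
            = ∑ k ∈ range M, coeff k (PowerSeries.map φ fK) * zs i1 ^ k :=
          Finset.sum_range_add_sum_Ico _ hM2
        have h0 : coeff 0 (PowerSeries.map φ fK) = 0 := by
          rw [PowerSeries.coeff_map, PowerSeries.coeff_zero_eq_constantCoeff, hFK.isLT.const,
            map_zero]
        have h1 : coeff 1 (PowerSeries.map φ fK) = φ πK := by
          rw [PowerSeries.coeff_map, hFK.isLT.lin]
        have hfirst : (∑ k ∈ range 2, coeff k (PowerSeries.map φ fK) * zs i1 ^ k)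
            = φ πK * zs i1 := by
          rw [Finset.sum_range_succ, Finset.sum_range_one, h0, h1]
          ring
        have hIco : ϖ ^ (2 * (v + 1)) ∣
            ∑ k ∈ Finset.Ico 2 M, coeff k (PowerSeries.map φ fK) * zs i1 ^ k := by
          apply Finset.dvd_sum
          intro k hk
          have hk2 : 2 ≤ k := (Finset.mem_Ico.mp hk).1
          have hd1 : ϖ ^ (2 * (v + 1)) ∣ zs i1 ^ 2 := by
            rw [two_mul, pow_add, pow_two]
            exact mul_dvd_mul ih ih
          have hd2 : zs i1 ^ 2 ∣ zs i1 ^ k := pow_dvd_pow _ hk2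
          exact ((hd1.trans hd2).mul_left _)
        have hdvdS : ϖ ^ (2 * (v + 1)) ∣
            ∑ k ∈ range M, coeff k (PowerSeries.map φ fK) * zs i1 ^ k := by
          have := (dvd_neg).mpr h
          simpa using this
        have hdvdπz : ϖ ^ (2 * (v + 1)) ∣ φ πK * zs i1 := by
          have h4 := dvd_sub hdvdS hIco
          rw [← hsplit, add_sub_cancel_right, hfirst] at h4
          exact h4
        have hdvdz : ϖ ^ (2 * (v + 1)) ∣ zs i1 := (IsUnit.dvd_mul_left hunit).mp hdvdπz
        exact (pow_dvd_pow ϖ (by omega : v + 1 + 1 ≤ 2 * (v + 1))).trans hdvdz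
    exact hzne (zero_of_forall_pow_dvd hϖ (fun n =>
      (pow_dvd_pow ϖ (Nat.le_succ n)).trans (hzpow n)))
  -- Step C : ϖ ∣ qK in A
  have hq' : ϖ ∣ (qK : A) := by
    have h := map_dvd φ hπq
    rw [map_natCast] at h
    exact hπ'.trans h
  -- coefficientwise congruence B i ≡ X mod ϖ
  have hBX : ∀ i n, ϖ ∣ coeff n (B i) - coeff n (X : A⟦X⟧) := by
    intro i n
    obtain ⟨M₀, hM⟩ := hB i n 1
    have h := hM (max M₀ 2) (le_max_left _ _)
    rw [pow_one] at h
    have hM2 : 2 ≤ max M₀ 2 := le_max_right _ _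
    set M := max M₀ 2
    have hS : ϖ ∣ (∑ i' ∈ range M, ∑ j' ∈ range M,
        mcoeff A i' j' (MvPowerSeries.map φ FK)
          * coeff n ((X : A⟦X⟧) ^ i' * (PowerSeries.C (zs i)) ^ j'))
        - coeff n (X : A⟦X⟧) := by
      have hXn : coeff n (X : A⟦X⟧) = ∑ i' ∈ range M, ∑ j' ∈ range M,
          (if j' = 0 then (if i' = 1 then (1 : A) else 0) * (if n = i' then 1 else 0)
            else 0) := by
        have hinner : ∀ i' : ℕ, ∑ j' ∈ range M,
            (if j' = 0 then (if i' = 1 then (1 : A) else 0) * (if n = i' then 1 else 0)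
              else 0)
            = (if i' = 1 then (1 : A) else 0) * (if n = i' then 1 else 0) := by
          intro i'
          rw [Finset.sum_ite_eq' (range M) 0
            (fun _ => (if i' = 1 then (1 : A) else 0) * (if n = i' then 1 else 0))]
          rw [if_pos (Finset.mem_range.mpr (by omega))]
        have houter : ∑ i' ∈ range M,
            (if i' = 1 then (1 : A) else 0) * (if n = i' then 1 else 0)
            = if n = 1 then (1 : A) else 0 := by
          have hcong : ∀ i' ∈ range M,
              (if i' = 1 then (1 : A) else 0) * (if n = i' then 1 else 0)
              = if i' = 1 then (if n = 1 then (1 : A) else 0) else 0 := by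
            intro i' _
            by_cases h1 : i' = 1 <;> simp [h1]
          rw [Finset.sum_congr rfl hcong,
            Finset.sum_ite_eq' (range M) 1 (fun _ => if n = 1 then (1 : A) else 0),
            if_pos (Finset.mem_range.mpr (by omega))]
        rw [Finset.sum_congr rfl (fun i' _ => hinner i'), houter, PowerSeries.coeff_X]
      rw [hXn]
      apply dvd_sum_sub
      intro i' _
      apply dvd_sum_sub
      intro j' _
      rw [mcoeff_map, coeff_X_pow_C]
      by_cases hj : j' = 0
      · subst hj
        rw [if_pos rfl, hFK.isFGL.unitX i', pow_zero, one_mul,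
          apply_ite φ, map_one, map_zero]
        simp
      · rw [if_neg hj]
        have hzj : ϖ ∣ zs i ^ j' := dvd_pow (hzmax i) hj
        have : φ (mcoeff OK i' j' FK) * (zs i ^ j' * (if n = i' then (1:A) else 0)) - 0
            = φ (mcoeff OK i' j' FK) * (zs i ^ j' * (if n = i' then (1:A) else 0)) := by
          ring
        rw [this]
        exact ((hzj.mul_right _).mul_left _)
    have := dvd_add h hS
    simpa using this
  -- fK ≡ X^qK mod ϖ coefficientwise
  have hfX : ∀ n, ϖ ∣ coeff n (PowerSeries.map φ fK) - coeff n ((X : A⟦X⟧) ^ qK) := by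
    intro n
    rw [PowerSeries.coeff_map, PowerSeries.coeff_X_pow]
    have h := map_dvd φ (hFK.isLT.frob n)
    rw [map_sub, apply_ite φ, map_one, map_zero] at h
    exact hπ'.trans h
  -- the main induction on N
  have main : ∀ N n, ϖ ^ N ∣ φ (coeff n g) := by
    intro N
    induction N with
    | zero => intro n; simpa using one_dvd _
    | succ N ih =>
      have hRgn : ∀ i n, ϖ ^ (N + 1) ∣ coeff n (Rg i) - φ (coeff n g) := by
        intro i n
        obtain ⟨M₀, hM⟩ := hRB i n (N + 1)
        have h := hM (max M₀ (n + 1)) (le_max_left _ _)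
        have hn : n < max M₀ (n + 1) := lt_of_lt_of_le (Nat.lt_succ_self n) (le_max_right _ _)
        set M := max M₀ (n + 1)
        have hXsum : ∑ k ∈ range M, coeff k (PowerSeries.map φ g)
            * coeff n ((X : A⟦X⟧) ^ k) = φ (coeff n g) := by
          rw [Finset.sum_eq_single n]
          · rw [PowerSeries.coeff_map, PowerSeries.coeff_X_pow, if_pos rfl, mul_one]
          · intro k _ hkn
            rw [PowerSeries.coeff_X_pow, if_neg (fun hc => hkn hc.symm), mul_zero]
          · intro hnn
            exact absurd (Finset.mem_range.mpr hn) hnn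
        have h2 : ϖ ^ (N + 1) ∣
            (∑ k ∈ range M, coeff k (PowerSeries.map φ g) * coeff n (B i ^ k))
            - ∑ k ∈ range M, coeff k (PowerSeries.map φ g)
                * coeff n ((X : A⟦X⟧) ^ k) := by
          apply dvd_sum_sub
          intro k _
          have heq : coeff k (PowerSeries.map φ g) * coeff n (B i ^ k)
              - coeff k (PowerSeries.map φ g) * coeff n ((X : A⟦X⟧) ^ k)
              = coeff k (PowerSeries.map φ g)
                * (coeff n (B i ^ k) - coeff n ((X : A⟦X⟧) ^ k)) := by
            ring
          rw [heq, PowerSeries.coeff_map, pow_succ]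
          exact mul_dvd_mul (ih k) (cw_pow ϖ (hBX i) k n)
        rw [hXsum] at h2
        have := dvd_add h h2
        simpa using this
      -- coefficient of the trace identity
      intro m
      set n : ℕ := qK * m with hn
      have hmn : m < n + 1 := by
        have : m ≤ qK * m := Nat.le_mul_of_pos_left m (by omega)
        omega
      have hcoeff := congrArg (coeff n) hsum
      rw [map_sum] at hcoeff
      -- RHS is divisible by ϖ^{N+1}
      have hRHS : ϖ ^ (N + 1) ∣ ∑ i : Fin qK, coeff n (Rg i) := by
        have h1 : ϖ ^ (N + 1) ∣ (∑ i : Fin qK, coeff n (Rg i))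
            - ∑ _i : Fin qK, φ (coeff n g) :=
          dvd_sum_sub _ _ _ _ (fun i _ => hRgn i n)
        have h2 : (∑ _i : Fin qK, φ (coeff n g)) = (qK : A) * φ (coeff n g) := by
          rw [Finset.sum_const, Finset.card_univ, Fintype.card_fin, nsmul_eq_mul]
        have h3 : ϖ ^ (N + 1) ∣ (qK : A) * φ (coeff n g) := by
          rw [pow_succ']
          exact mul_dvd_mul hq' (ih n)
        have := dvd_add h1 (h2 ▸ h3)
        simpa using this
      -- LHS coefficient
      have hLcoeff : coeff n (PowerSeries.map φ (pcomp (PowerSeries.C αK * g) fK))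
          = ∑ k ∈ range (n + 1), φ αK * φ (coeff k g) * φ (coeff n (fK ^ k)) := by
        rw [PowerSeries.coeff_map, pcomp, PowerSeries.coeff_mk, map_sum]
        apply Finset.sum_congr rfl
        intro k _
        rw [PowerSeries.coeff_C_mul, map_mul, map_mul]
      have hdelta : ϖ ^ (N + 1) ∣
          (∑ k ∈ range (n + 1), φ αK * φ (coeff k g) * φ (coeff n (fK ^ k)))
          - φ αK * φ (coeff m g) := by
        have hsum2 : ∑ k ∈ range (n + 1),
            φ αK * φ (coeff k g) * (if n = qK * k then (1 : A) else 0)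
            = φ αK * φ (coeff m g) := by
          rw [Finset.sum_eq_single m]
          · rw [if_pos hn, mul_one]
          · intro k _ hkm
            have hne : n ≠ qK * k := by
              intro hc
              apply hkm
              have h5 : qK * k = qK * m := by rw [← hc, hn]
              exact Nat.eq_of_mul_eq_mul_left (by omega) h5
            rw [if_neg hne, mul_zero]
          · intro hmm
            exact absurd (Finset.mem_range.mpr hmn) hmm
        rw [← hsum2]
        apply dvd_sum_sub
        intro k _
        have heq : φ αK * φ (coeff k g) * φ (coeff n (fK ^ k))
            - φ αK * φ (coeff k g) * (if n = qK * k then (1 : A) else 0)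
            = (φ αK * (φ (coeff n (fK ^ k)) - (if n = qK * k then (1 : A) else 0)))
              * φ (coeff k g) := by
          ring
        rw [heq, pow_succ']
        apply mul_dvd_mul
        · apply Dvd.dvd.mul_left
          have hmap : φ (coeff n (fK ^ k)) = coeff n ((PowerSeries.map φ fK) ^ k) := by
            rw [← map_pow, PowerSeries.coeff_map]
          have hXq : coeff n (((X : A⟦X⟧) ^ qK) ^ k) = if n = qK * k then (1 : A) else 0 := by
            rw [← pow_mul, PowerSeries.coeff_X_pow]
          rw [hmap, ← hXq]
          exact cw_pow ϖ hfX k n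
        · exact ih k
      rw [hLcoeff] at hcoeff
      have hLdvd : ϖ ^ (N + 1) ∣
          ∑ k ∈ range (n + 1), φ αK * φ (coeff k g) * φ (coeff n (fK ^ k)) := by
        rw [hcoeff]
        exact hRHS
      have hfin : ϖ ^ (N + 1) ∣ φ αK * φ (coeff m g) := by
        have := dvd_sub hLdvd hdelta
        simpa using this
      have hαu : IsUnit (φ αK) := by
        have : φ αK = algebraMap OL A α := by
          rw [hαK, hφ, ← IsScalarTower.algebraMap_apply OL OK A]
        rw [this]
        exact hα.map (algebraMap OL A)
      exact (IsUnit.dvd_mul_left hαu).mp hfin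
  -- conclude
  ext n
  rw [map_zero]
  apply hinj2
  rw [map_zero]
  exact zero_of_forall_pow_dvd hϖ (fun N => main N n)

end Coleman
end
end

section
/- Let $F_K$ be a Lubin-Tate formal group over $\mathcal{O}_K$ with trace operator $\mathscr{L}_{F_K}$, and fix series $k(x) \in x^{q_K-1}\mathcal{O}_K[[x]]$ and $w(x) \in \mathcal{O}_K[[x]]$ with $\mathscr{L}_{F_K}(k) = \pi_K w$ and $w$ a unit in $\mathcal{O}_K[[x]]$ (equivalently $w(0) \in \mathcal{O}_K^\times$), satisfying the Coleman identity $\mathscr{L}_{F_K}\big(\tfrac{k(x)\,g([\pi_K]_K(x))}{\pi_K w([\pi_K]_K(x))}\big) = g(x)$ for all $g \in \mathcal{O}_K[[x]]$. Let $\alpha(x) \in \pi_K^2\mathcal{O}_K[[x]]$, let $\mathscr{E}^\alpha_K = \{ f \in \mathcal{O}_K[[x]] : \mathscr{L}_{F_K}(f) = \alpha(x) f(x)\}$ and $\mathscr{C}_K = \ker(\mathscr{L}_{F_K}) \subseteq \mathcal{O}_K[[x]]$. Then the map $\rho_\alpha(f) = f(x) - \frac{k(x)\,\alpha([\pi_K]_K(x))\,f([\pi_K]_K(x))}{\pi_K\,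 w([\pi_K]_K(x))}$ is an isomorphism of $\mathcal{O}_K$-modules $\mathscr{E}^\alpha_K \to \mathscr{C}_K$. -/
open PowerSeries Finset

noncomputable section

namespace Coleman

variable {R : Type*} [CommRing R]

section Helpers

variable {R : Type*} [CommRing R]

lemma coeff_pcomp (g h : R⟦X⟧) (n : ℕ) :
    coeff n (pcomp g h) = ∑ k ∈ range (n+1), coeff k g * coeff n (h^k) := by
  simp [pcomp]

lemma coeff_pow_eq_zero {h : R⟦X⟧} (h0 : constantCoeff h = 0) {n k : ℕ} (hk : n < k) :
    coeff n (h ^ k) = 0 := by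
  have : (X : R⟦X⟧) ^ k ∣ h ^ k := pow_dvd_pow_of_dvd (X_dvd_iff.mpr h0) k
  exact X_pow_dvd_iff.mp this n hk

lemma coeff_pcomp_eq_sum {h : R⟦X⟧} (h0 : constantCoeff h = 0) (g : R⟦X⟧) {n M : ℕ}
    (hM : n < M) :
    coeff n (pcomp g h) = ∑ k ∈ range M, coeff k g * coeff n (h ^ k) := by
  rw [coeff_pcomp]
  refine Finset.sum_subset (Finset.range_subset_range.2 hM) ?_
  intro k _ hk
  rw [coeff_pow_eq_zero h0 (by simpa using hk), mul_zero]

lemma pcomp_add (g g' h : R⟦X⟧) : pcomp (g + g') h = pcomp g h + pcomp g' h := by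
  ext n; simp [coeff_pcomp, add_mul, Finset.sum_add_distrib]

lemma pcomp_sub (g g' h : R⟦X⟧) : pcomp (g - g') h = pcomp g h - pcomp g' h := by
  ext n; simp [coeff_pcomp, sub_mul, Finset.sum_sub_distrib]

lemma pcomp_C_mul (c : R) (g h : R⟦X⟧) : pcomp (C c * g) h = C c * pcomp g h := by
  ext n; simp [coeff_pcomp, Finset.mul_sum, mul_assoc]

lemma constantCoeff_pcomp (g h : R⟦X⟧) :
    constantCoeff (pcomp g h) = constantCoeff g := by
  have := coeff_pcomp g h 0
  simp at this
  simpa [← coeff_zero_eq_constantCoeff] using this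

lemma pcomp_mul {h : R⟦X⟧} (h0 : constantCoeff h = 0) (g g' : R⟦X⟧) :
    pcomp (g * g') h = pcomp g h * pcomp g' h := by
  ext n
  set Sg : R⟦X⟧ := ∑ i ∈ range (n+1), C (coeff i g) * h ^ i with hSg
  set Sg' : R⟦X⟧ := ∑ i ∈ range (n+1), C (coeff i g') * h ^ i with hSg'
  have hcoe : ∀ (u : R⟦X⟧) (m : ℕ), m ≤ n →
      coeff m (∑ i ∈ range (n+1), C (coeff i u) * h ^ i) = coeff m (pcomp u h) := by
    intro u m hm
    rw [coeff_pcomp_eq_sum h0 u (lt_of_le_of_lt hm (Nat.lt_succ_self n))]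
    simp [coeff_C_mul]
  have hrhs : coeff n (pcomp g h * pcomp g' h) = coeff n (Sg * Sg') := by
    rw [coeff_mul, coeff_mul]
    refine Finset.sum_congr rfl ?_
    intro p hp
    rw [HasAntidiagonal.mem_antidiagonal] at hp
    rw [hcoe g p.1 (by omega), hcoe g' p.2 (by omega)]
  have hexp : coeff n (Sg * Sg') =
      ∑ p ∈ (range (n+1)) ×ˢ (range (n+1)),
        coeff p.1 g * coeff p.2 g' * coeff n (h ^ (p.1 + p.2)) := by
    rw [hSg, hSg', Finset.sum_mul_sum, ← Finset.sum_product']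
    rw [map_sum]
    refine Finset.sum_congr rfl ?_
    intro p _
    rw [mul_mul_mul_comm, ← map_mul, ← pow_add, coeff_C_mul]
  have hlhs : coeff n (pcomp (g * g') h) =
      ∑ p ∈ (range (n+1)) ×ˢ (range (n+1)),
        coeff p.1 g * coeff p.2 g' * coeff n (h ^ (p.1 + p.2)) := by
    rw [coeff_pcomp]
    have h1 : ∀ m ∈ range (n+1), coeff m (g * g') * coeff n (h ^ m) =
        ∑ p ∈ antidiagonal m, coeff p.1 g * coeff p.2 g' * coeff n (h ^ (p.1 + p.2)) := by
      intro m _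
      rw [coeff_mul, Finset.sum_mul]
      refine Finset.sum_congr rfl ?_
      intro p hp
      rw [HasAntidiagonal.mem_antidiagonal] at hp
      rw [hp]
    rw [Finset.sum_congr rfl h1]
    rw [← Finset.sum_biUnion]
    · refine Finset.sum_subset ?_ ?_
      · intro p hp
        simp only [Finset.mem_biUnion, Finset.mem_range, HasAntidiagonal.mem_antidiagonal] at hp
        obtain ⟨m, hm, hpm⟩ := hp
        simp only [Finset.mem_product, Finset.mem_range]
        omega
      · intro p hp hnp
        simp only [Finset.mem_biUnion, Finset.mem_range, HasAntidiagonal.mem_antidiagonal] at hnp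
        have : n < p.1 + p.2 := by
          by_contra hc
          exact hnp ⟨p.1 + p.2, by omega, rfl⟩
        rw [coeff_pow_eq_zero h0 this, mul_zero]
    · intro a _ b _ hab
      simp only [Finset.disjoint_left, Finset.mem_coe, HasAntidiagonal.mem_antidiagonal]
      intro p h1 h2
      exact hab (h1 ▸ h2 ▸ rfl)
  rw [hlhs, hrhs, hexp]

lemma dvdAll_mul {c d : R} {a b : R⟦X⟧} (ha : DvdAll c a) (hb : DvdAll d b) :
    DvdAll (c * d) (a * b) := by
  intro n
  rw [coeff_mul]
  exact Finset.dvd_sum fun p _ => mul_dvd_mul (ha p.1) (hb p.2)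

lemma dvdAll_mul_left {c : R} {b : R⟦X⟧} (a : R⟦X⟧) (hb : DvdAll c b) :
    DvdAll c (a * b) := by
  intro n
  rw [coeff_mul]
  exact Finset.dvd_sum fun p _ => Dvd.dvd.mul_left (hb p.2) _

lemma dvdAll_add {c : R} {a b : R⟦X⟧} (ha : DvdAll c a) (hb : DvdAll c b) :
    DvdAll c (a + b) := by
  intro n; rw [map_add]; exact dvd_add (ha n) (hb n)

lemma dvdAll_sub {c : R} {a b : R⟦X⟧} (ha : DvdAll c a) (hb : DvdAll c b) :
    DvdAll c (a - b) := by
  intro n; rw [map_sub]; exact dvd_sub (ha n) (hb n)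

lemma dvdAll_neg {c : R} {a : R⟦X⟧} (ha : DvdAll c a) : DvdAll c (-a) := by
  intro n; rw [map_neg]; exact (dvd_neg).2 (ha n)

lemma dvdAll_of_dvd {c d : R} (h : c ∣ d) {a : R⟦X⟧} (ha : DvdAll d a) : DvdAll c a :=
  fun n => dvd_trans h (ha n)

lemma dvdAll_pcomp {c : R} {g : R⟦X⟧} (hg : DvdAll c g) (h : R⟦X⟧) :
    DvdAll c (pcomp g h) := by
  intro n
  rw [coeff_pcomp]
  exact Finset.dvd_sum fun k _ => Dvd.dvd.mul_right (hg k) _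

lemma exists_C_mul {c : R} {f : R⟦X⟧} (h : DvdAll c f) : ∃ g, f = C c * g := by
  refine ⟨PowerSeries.mk (fun n => (h n).choose), ?_⟩
  ext n
  rw [coeff_C_mul, coeff_mk, ← (h n).choose_spec]

lemma smod_iff_dvd (π : R) (n : ℕ) (x y : R) :
    x ≡ y [SMOD ((Ideal.span {π}) ^ n • ⊤ : Submodule R R)] ↔ π ^ n ∣ x - y := by
  rw [SModEq.sub_mem, smul_eq_mul, Ideal.mul_top, Ideal.span_singleton_pow,
    Ideal.mem_span_singleton]

lemma ps_eq_zero_of_forall_dvdAll {π : R} (hH : IsHausdorff (Ideal.span {π}) R) {f : R⟦X⟧}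
    (h : ∀ N : ℕ, DvdAll (π ^ N) f) : f = 0 := by
  ext n
  rw [map_zero]
  refine hH.haus _ fun N => ?_
  rw [smod_iff_dvd, sub_zero]
  exact h N n

lemma fixed_point {OK : Type*} [CommRing OK] (π : OK)
    [inst : IsAdicComplete (Ideal.span {π}) OK] (G fK h : OK⟦X⟧) :
    ∃ f : OK⟦X⟧, f = h + C π * (G * pcomp f fK) := by
  set T : OK⟦X⟧ → OK⟦X⟧ := fun f => C π * (G * pcomp f fK) with hT
  have hTsub : ∀ f g, T f - T g = T (f - g) := by
    intro f g
    simp only [hT, pcomp_sub, mul_sub]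
  have hTdvd : ∀ (N : ℕ) (f : OK⟦X⟧), DvdAll (π ^ N) f → DvdAll (π ^ (N+1)) (T f) := by
    intro N f hf n
    simp only [hT, coeff_C_mul, pow_succ]
    rw [mul_comm (π ^ N) π]
    exact mul_dvd_mul_left π (dvdAll_mul_left G (dvdAll_pcomp hf fK) n)
  set F : ℕ → OK⟦X⟧ := fun m => Nat.rec h (fun _ fm => h + T fm) m with hF
  have hFs : ∀ m, F (m+1) = h + T (F m) := fun m => rfl
  have hstep : ∀ m, DvdAll (π ^ (m+1)) (F (m+1) - F m) := by
    intro m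
    induction m with
    | zero =>
        rw [hFs 0]
        have hF0 : F 0 = h := rfl
        rw [hF0]
        have : h + T h - h = T h := by ring
        rw [this]
        exact hTdvd 0 _ (fun n => by rw [pow_zero]; exact one_dvd _)
    | succ m ih =>
        rw [hFs (m+1), hFs m]
        have : h + T (F (m+1)) - (h + T (F m)) = T (F (m+1) - F m) := by
          rw [← hTsub]; ring
        rw [this]
        exact hTdvd _ _ ih
  have hgap : ∀ m d, DvdAll (π ^ m) (F (m + d) - F m) := by
    intro m d
    induction d with
    | zero => intro n; simp
    | succ d ih =>
        have : F (m + (d+1)) - F m = (F (m+d+1) - F (m+d)) + (F (m+d) - F m) := by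
          rw [show m + (d+1) = m + d + 1 from rfl]; ring
        rw [this]
        exact dvdAll_add (dvdAll_of_dvd (pow_dvd_pow π (by omega)) (hstep (m+d))) ih
  have hlim : ∀ j : ℕ, ∃ L : OK, ∀ m, π ^ m ∣ coeff j (F m) - L := by
    intro j
    have hcau : ∀ {m n : ℕ}, m ≤ n → (fun m => coeff j (F m)) m ≡ (fun m => coeff j (F m)) n
        [SMOD ((Ideal.span {π}) ^ m • ⊤ : Submodule OK OK)] := by
      intro m n hmn
      rw [smod_iff_dvd]
      have := hgap m (n - m) j
      rw [show m + (n - m) = n from by omega] at this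
      rw [map_sub] at this
      exact (dvd_sub_comm.mp this)
    obtain ⟨L, hL⟩ := IsPrecomplete.prec inst.toIsPrecomplete
      (f := fun m => coeff j (F m)) hcau
    exact ⟨L, fun m => (smod_iff_dvd π m _ _).1 (hL m)⟩
  choose L hL using hlim
  refine ⟨PowerSeries.mk L, ?_⟩
  set f : OK⟦X⟧ := PowerSeries.mk L with hf
  have hFf : ∀ m, DvdAll (π ^ m) (F m - f) := by
    intro m j
    rw [map_sub, hf, coeff_mk]
    exact hL j m
  rw [← sub_eq_zero]
  refine ps_eq_zero_of_forall_dvdAll inst.toIsHausdorff fun N => ?_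
  have hEeq : f - (h + T f) = -(F (N+1) - f) + T (F N - f) := by
    rw [← hTsub, hFs N]; ring
  rw [show (C π * (G * pcomp f fK)) = T f from rfl, hEeq]
  exact dvdAll_add
    (dvdAll_neg (dvdAll_of_dvd (pow_dvd_pow π (by omega)) (hFf (N+1))))
    (dvdAll_of_dvd (pow_dvd_pow π (by omega)) (hTdvd N _ (hFf N)))

lemma isSubst2_unique {t : R} (hH : IsHausdorff (Ideal.span {t}) R)
    {F : MvPowerSeries (Fin 2) R} {a b S S' : R⟦X⟧}
    (h1 : IsSubst2 t F a b S) (h2 : IsSubst2 t F a b S') : S = S' := by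
  ext n
  rw [← sub_eq_zero]
  refine hH.haus _ fun N => ?_
  rw [smod_iff_dvd, sub_zero]
  obtain ⟨M₁, hM₁⟩ := h1 n N
  obtain ⟨M₂, hM₂⟩ := h2 n N
  have d1 := hM₁ (max M₁ M₂) (le_max_left _ _)
  have d2 := hM₂ (max M₁ M₂) (le_max_right _ _)
  have : coeff n S - coeff n S' =
      (coeff n S - ∑ i ∈ range (max M₁ M₂), ∑ j ∈ range (max M₁ M₂),
        mcoeff R i j F * coeff n (a ^ i * b ^ j)) -
      (coeff n S' - ∑ i ∈ range (max M₁ M₂), ∑ j ∈ range (max M₁ M₂),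
        mcoeff R i j F * coeff n (a ^ i * b ^ j)) := by ring
  rw [this]
  exact dvd_sub d1 d2

lemma IsSubst.sub {t : R} {g g' a S S' : R⟦X⟧} (h : IsSubst t g a S)
    (h' : IsSubst t g' a S') : IsSubst t (g - g') a (S - S') := by
  intro n N
  obtain ⟨M₁, hM₁⟩ := h n N
  obtain ⟨M₂, hM₂⟩ := h' n N
  refine ⟨max M₁ M₂, fun M hM => ?_⟩
  have d1 := hM₁ M (le_trans (le_max_left _ _) hM)
  have d2 := hM₂ M (le_trans (le_max_right _ _) hM)
  have : coeff n (S - S') - ∑ k ∈ range M, coeff k (g - g') * coeff n (a ^ k) =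
      (coeff n S - ∑ k ∈ range M, coeff k g * coeff n (a ^ k)) -
      (coeff n S' - ∑ k ∈ range M, coeff k g' * coeff n (a ^ k)) := by
    simp only [map_sub, sub_mul, Finset.sum_sub_distrib]
    ring
  rw [this]
  exact dvd_sub d1 d2

lemma IsSubst.add {t : R} {g g' a S S' : R⟦X⟧} (h : IsSubst t g a S)
    (h' : IsSubst t g' a S') : IsSubst t (g + g') a (S + S') := by
  intro n N
  obtain ⟨M₁, hM₁⟩ := h n N
  obtain ⟨M₂, hM₂⟩ := h' n N
  refine ⟨max M₁ M₂, fun M hM => ?_⟩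
  have d1 := hM₁ M (le_trans (le_max_left _ _) hM)
  have d2 := hM₂ M (le_trans (le_max_right _ _) hM)
  have : coeff n (S + S') - ∑ k ∈ range M, coeff k (g + g') * coeff n (a ^ k) =
      (coeff n S - ∑ k ∈ range M, coeff k g * coeff n (a ^ k)) +
      (coeff n S' - ∑ k ∈ range M, coeff k g' * coeff n (a ^ k)) := by
    simp only [map_add, add_mul, Finset.sum_add_distrib]
    ring
  rw [this]
  exact dvd_add d1 d2

end Helpers

section TraceHelpers

variable {OK A : Type*} [CommRing OK] [CommRing A] [Algebra OK A]

lemma isTraceOf_sub {ϖ : A} (hH : IsHausdorff (Ideal.span {ϖ}) A)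
    {FKm : MvPowerSeries (Fin 2) A} {q : ℕ} {zs : Fin q → A} {fK g T g' T' : OK⟦X⟧}
    (h : IsTraceOf ϖ FKm zs fK g T) (h' : IsTraceOf ϖ FKm zs fK g' T') :
    IsTraceOf ϖ FKm zs fK (g - g') (T - T') := by
  obtain ⟨Rg, ⟨B, hB, hRg⟩, hsum⟩ := h
  obtain ⟨Rg', ⟨B', hB', hRg'⟩, hsum'⟩ := h'
  have hBB : B = B' := funext fun i => isSubst2_unique hH (hB i) (hB' i)
  refine ⟨fun i => Rg i - Rg' i, ⟨B, hB, fun i => ?_⟩, ?_⟩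
  · have := (hRg i).sub (a := B i) (hBB ▸ hRg' i)
    rwa [← map_sub] at this
  · rw [pcomp_sub, map_sub, hsum, hsum', ← Finset.sum_sub_distrib]

lemma isTraceOf_add {ϖ : A} (hH : IsHausdorff (Ideal.span {ϖ}) A)
    {FKm : MvPowerSeries (Fin 2) A} {q : ℕ} {zs : Fin q → A} {fK g T g' T' : OK⟦X⟧}
    (h : IsTraceOf ϖ FKm zs fK g T) (h' : IsTraceOf ϖ FKm zs fK g' T') :
    IsTraceOf ϖ FKm zs fK (g + g') (T + T') := by
  obtain ⟨Rg, ⟨B, hB, hRg⟩, hsum⟩ := h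
  obtain ⟨Rg', ⟨B', hB', hRg'⟩, hsum'⟩ := h'
  have hBB : B = B' := funext fun i => isSubst2_unique hH (hB i) (hB' i)
  refine ⟨fun i => Rg i + Rg' i, ⟨B, hB, fun i => ?_⟩, ?_⟩
  · have := (hRg i).add (a := B i) (hBB ▸ hRg' i)
    rwa [← map_add] at this
  · rw [pcomp_add, map_add, hsum, hsum', ← Finset.sum_add_distrib]

end TraceHelpers

/-- **Theorem 3.0.1 / Theorem C.** Let `k(x) ∈ x^{q_K-1}O_K⟦x⟧` and
`w ∈ O_K⟦x⟧^×` with `𝓛_{F_K}(k) = π_K·w`, satisfying the Coleman identity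
`𝓛_{F_K}(k·g([π_K](x))/(π_K·w([π_K](x)))) = g` for all `g`.  For
`α(x) ∈ π_K²·O_K⟦x⟧`, the map
`ρ_α(f) = f(x) - k(x)·α([π_K](x))·f([π_K](x))/(π_K·w([π_K](x)))` is an isomorphism of
`O_K`-modules from the eigenspace `𝓔^α_K = {f : 𝓛_{F_K}(f) = α·f}` onto
`𝓒_K = ker 𝓛_{F_K}`. -/
theorem stmt14 {OK A : Type*}
    [CommRing OK] [IsDomain OK] [IsDiscreteValuationRing OK]
    [CommRing A] [IsDomain A] [IsDiscreteValuationRing A] [Algebra OK A]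
    (hinj : Function.Injective (algebraMap OK A))
    (πK : OK) (hπK : Irreducible πK) (ϖ : A) (hϖ : Irreducible ϖ)
    [IsAdicComplete (Ideal.span {ϖ}) A] [IsAdicComplete (Ideal.span {πK}) OK]
    (qK : ℕ) (hqK : 2 ≤ qK)
    (fK : OK⟦X⟧) (FK : MvPowerSeries (Fin 2) OK) (hFK : IsLTFGL πK qK fK FK)
    (zs : Fin qK → A) (hz0 : ∃ i, zs i = 0)
    (hzroot : ∀ i, IsEvalAt ϖ (PowerSeries.map (algebraMap OK A) fK) (zs i) 0)
    (hzinj : Function.Injective zs) (hzmax : ∀ i, ϖ ∣ zs i)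
    -- the auxiliary Coleman series `k` and `w`
    (k w : OK⟦X⟧) (hk : ∀ n < qK - 1, coeff n k = 0)
    (hwunit : IsUnit w)
    (hkw : IsTraceOf ϖ (MvPowerSeries.map (algebraMap OK A) FK) zs fK k
      (PowerSeries.C πK * w))
    -- the Coleman identity: `𝓛_{F_K}(k·g([π_K](x))/(π_K·w([π_K](x)))) = g(x)`
    (hcol : ∀ g D : OK⟦X⟧,
      PowerSeries.C πK * pcomp w fK * D = k * pcomp g fK →
      IsTraceOf ϖ (MvPowerSeries.map (algebraMap OK A) FK) zs fK D g)
    (α : OK⟦X⟧) (hα : DvdAll (πK ^ 2) α)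
    -- `MemE f` : `f ∈ 𝓔^α_K`;  `MemC h` : `h ∈ 𝓒_K = ker 𝓛_{F_K}`
    (MemE MemC : OK⟦X⟧ → Prop)
    (hMemE : ∀ f, MemE f ↔
      IsTraceOf ϖ (MvPowerSeries.map (algebraMap OK A) FK) zs fK f (α * f))
    (hMemC : ∀ h, MemC h ↔
      IsTraceOf ϖ (MvPowerSeries.map (algebraMap OK A) FK) zs fK h 0)
    -- `Rho f D` : `D = k·α([π_K](x))·f([π_K](x))/(π_K·w([π_K](x)))`, so `ρ_α(f) = f - D`
    (Rho : OK⟦X⟧ → OK⟦X⟧ → Prop)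
    (hRho : ∀ f D, Rho f D ↔
      PowerSeries.C πK * pcomp w fK * D = k * pcomp α fK * pcomp f fK) :
    -- `ρ_α` maps `𝓔^α_K` into `𝓒_K` (and is defined on all of `𝓔^α_K`)
    (∀ f, MemE f → ∃ D, Rho f D ∧ MemC (f - D)) ∧
    -- `ρ_α` is `O_K`-linear
    (∀ f₁ D₁ f₂ D₂ (c : OK), Rho f₁ D₁ → Rho f₂ D₂ →
      Rho (f₁ + f₂) (D₁ + D₂) ∧ Rho (PowerSeries.C c * f₁) (PowerSeries.C c * D₁)) ∧
    -- `ρ_α : 𝓔^α_K → 𝓒_K` is injective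
    (∀ f₁ D₁ f₂ D₂, MemE f₁ → MemE f₂ → Rho f₁ D₁ → Rho f₂ D₂ →
      f₁ - D₁ = f₂ - D₂ → f₁ = f₂) ∧
    -- `ρ_α : 𝓔^α_K → 𝓒_K` is surjective
    (∀ h, MemC h → ∃ f D, MemE f ∧ Rho f D ∧ f - D = h) := by
  classical
  have hHA : IsHausdorff (Ideal.span {ϖ}) A := inferInstance
  have hHO : IsHausdorff (Ideal.span {πK}) OK := inferInstance
  have hfK0 : constantCoeff fK = 0 := hFK.isLT.const
  have hπ0 : (πK : OK) ≠ 0 := hπK.ne_zero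
  -- W := pcomp w fK is a unit
  have hWu : IsUnit (pcomp w fK) := by
    rw [PowerSeries.isUnit_iff_constantCoeff, constantCoeff_pcomp]
    exact PowerSeries.isUnit_iff_constantCoeff.mp hwunit
  obtain ⟨u, hu⟩ := hWu
  -- pcomp α fK = C (πK^2) * β
  have hpA : DvdAll (πK ^ 2) (pcomp α fK) := dvdAll_pcomp hα fK
  obtain ⟨β, hβ⟩ := exists_C_mul hpA
  set G : OK⟦X⟧ := ↑u⁻¹ * (k * β) with hG
  have hCsq : PowerSeries.C (πK ^ 2) = PowerSeries.C πK * PowerSeries.C πK := by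
    rw [pow_two, map_mul]
  have huu : (↑u : OK⟦X⟧) * ↑u⁻¹ = 1 := u.mul_inv
  have hRhoT : ∀ f : OK⟦X⟧, Rho f (PowerSeries.C πK * (G * pcomp f fK)) := by
    intro f
    rw [hRho]
    calc PowerSeries.C πK * pcomp w fK * (PowerSeries.C πK * (G * pcomp f fK))
        = (↑u * ↑u⁻¹) * (PowerSeries.C πK * PowerSeries.C πK * (k * β) * pcomp f fK) := by
          rw [← hu, hG]; ring
      _ = k * (PowerSeries.C (πK ^ 2) * β) * pcomp f fK := by rw [huu, hCsq]; ring
      _ = k * pcomp α fK * pcomp f fK := by rw [← hβ]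
  -- the trace of D in terms of α*f
  have hTraceD : ∀ f : OK⟦X⟧,
      IsTraceOf ϖ (MvPowerSeries.map (algebraMap OK A) FK) zs fK
        (PowerSeries.C πK * (G * pcomp f fK)) (α * f) := by
    intro f
    refine hcol (α * f) _ ?_
    rw [pcomp_mul hfK0]
    linear_combination (hRho f _).mp (hRhoT f)
  refine ⟨?_, ?_, ?_, ?_⟩
  · -- maps into 𝓒
    intro f hf
    refine ⟨PowerSeries.C πK * (G * pcomp f fK), hRhoT f, ?_⟩
    have hTf := (hMemE f).mp hf
    have := isTraceOf_sub hHA hTf (hTraceD f)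
    rw [sub_self] at this
    exact (hMemC _).mpr this
  · -- linearity
    intro f₁ D₁ f₂ D₂ c h1 h2
    rw [hRho] at h1 h2
    constructor
    · rw [hRho, pcomp_add]
      linear_combination h1 + h2
    · rw [hRho, pcomp_C_mul]
      linear_combination PowerSeries.C c * h1
  · -- injectivity
    intro f₁ D₁ f₂ D₂ _ _ h1 h2 heq
    rw [hRho] at h1 h2
    have hEq : PowerSeries.C πK * (pcomp w fK * (f₁ - f₂)) =
        k * (pcomp α fK * pcomp (f₁ - f₂) fK) := by
      rw [pcomp_sub]
      have h12 : f₁ - f₂ = D₁ - D₂ := by linear_combination heq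
      calc PowerSeries.C πK * (pcomp w fK * (f₁ - f₂))
          = PowerSeries.C πK * pcomp w fK * D₁
            - PowerSeries.C πK * pcomp w fK * D₂ := by rw [h12]; ring
        _ = k * (pcomp α fK * (pcomp f₁ fK - pcomp f₂ fK)) := by
            rw [h1, h2]; ring
    set f := f₁ - f₂ with hfdef
    have hall : ∀ N, DvdAll (πK ^ N) f := by
      intro N
      induction N with
      | zero => intro n; rw [pow_zero]; exact one_dvd _
      | succ N ih =>
          have hRdvd : DvdAll (πK ^ (N + 2)) (k * (pcomp α fK * pcomp f fK)) := by
            refine dvdAll_of_dvd ?_ (dvdAll_mul_left k (dvdAll_mul hpA (dvdAll_pcomp ih fK)))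
            rw [← pow_add, Nat.add_comm]
          have hWf : DvdAll (πK ^ (N + 1)) (pcomp w fK * f) := by
            intro n
            have := hEq ▸ hRdvd n
            rw [coeff_C_mul] at this
            rw [show (N + 2) = 1 + (N + 1) from by omega, pow_add, pow_one] at this
            exact (mul_dvd_mul_iff_left hπ0).mp this
          have hfeq : f = ↑u⁻¹ * (pcomp w fK * f) := by
            rw [← hu, ← mul_assoc, u.inv_mul, one_mul]
          rw [hfeq]
          exact dvdAll_mul_left _ hWf
    have : f = 0 := ps_eq_zero_of_forall_dvdAll hHO hall
    exact sub_eq_zero.mp this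
  · -- surjectivity
    intro h hh
    obtain ⟨f, hfix⟩ := fixed_point πK G fK h
    set D := PowerSeries.C πK * (G * pcomp f fK) with hD
    have hTf : IsTraceOf ϖ (MvPowerSeries.map (algebraMap OK A) FK) zs fK f (α * f) := by
      have := isTraceOf_add hHA ((hMemC h).mp hh) (hTraceD f)
      rw [← hfix, zero_add] at this
      exact this
    exact ⟨f, D, (hMemE f).mpr hTf, hRhoT f, by rw [hD]; linear_combination hfix⟩

end Coleman
end
end
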